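/- Let N ≥ 1 be an integer, let ℏ > 0 be real, let λ₁, …, λ_N be real numbers with λ_i − λ_j ∉ ℏℤ for all i ≠ j, and let x < 0 be real. Then the double series ∑_{i=1}^{N} ∑_{n=0}^{∞} (1/(n! ℏ^n)) · exp(−(x/ℏ)(λ_i − nℏ)) · ∏_{j ≠ i} |Γ₁(λ_i − λ_j − nℏ | ℏ)| converges (i.e., the residue expansion of the one-variable Mellin–Barnes integral converges absolutely). -/

import Mathlib

/-- The function `Γ₁(z|ℏ) = ℏ^{z/ℏ} Γ(z/ℏ)` of the paper. -/
noncomputable def Γ₁ (z : ℂ) (ℏ : ℝ) : ℂ :=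
  (ℏ : ℂ) ^ (z / ℏ) * Complex.Gamma (z / ℏ)

lemma Γ₁_rec {ℏ : ℝ} (hℏ : 0 < ℏ) {z : ℂ} (hz : z ≠ ℏ) :
    Γ₁ z ℏ = (z - ℏ) * Γ₁ (z - ℏ) ℏ := by
  have hℏ0 : (ℏ : ℂ) ≠ 0 := by exact_mod_cast hℏ.ne'
  have hs : z / ℏ - 1 ≠ 0 := by
    intro h
    apply hz
    rw [sub_eq_zero] at h
    rw [div_eq_iff hℏ0] at h
    simpa using h
  have hdiv : (z - ↑ℏ) / ↑ℏ = z / ↑ℏ - 1 := by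
    rw [sub_div, div_self hℏ0]
  have hG : Complex.Gamma (z / ℏ) = (z / ℏ - 1) * Complex.Gamma (z / ℏ - 1) := by
    have := Complex.Gamma_add_one _ hs
    rw [sub_add_cancel] at this
    exact this
  unfold Γ₁
  rw [hdiv, hG, Complex.cpow_sub _ _ hℏ0, Complex.cpow_one]
  field_simp

lemma Γ₁_abs_dec {ℏ : ℝ} (hℏ : 0 < ℏ) {z : ℂ} (hz : z ≠ ℏ)
    (h1 : 1 ≤ ‖z - ℏ‖) :
    ‖Γ₁ (z - ℏ) ℏ‖ ≤ ‖Γ₁ z ℏ‖ := by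
  rw [Γ₁_rec hℏ hz, norm_mul]
  nlinarith [norm_nonneg (Γ₁ (z - ℏ) ℏ)]


/-- absolute convergence of the residue expansion of the
one-variable Mellin–Barnes integral (proof of Theorem 1.2 of the paper):
for `x < 0` the double series
`∑_{i=1}^N ∑_{n≥0} (1/(n! ℏ^n)) exp(−(x/ℏ)(λ_i−nℏ)) ∏_{j≠i} |Γ₁(λ_i−λ_j−nℏ|ℏ)|`
converges. -/
theorem mellinBarnes_residue_expansion_summable
    (N : ℕ) (hN : 1 ≤ N) (ℏ : ℝ) (hℏ : 0 < ℏ) (lam : Fin N → ℝ)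
    (hlam : ∀ i j, i ≠ j → ∀ n : ℤ, lam i - lam j ≠ ℏ * n)
    (x : ℝ) (hx : x < 0) :
    Summable (fun p : Fin N × ℕ =>
      (1 / ((p.2.factorial : ℝ) * ℏ ^ p.2)) *
        Real.exp (-(x / ℏ) * (lam p.1 - (p.2 : ℝ) * ℏ)) *
        ∏ j ∈ Finset.univ.erase p.1,
          ‖Γ₁ ((lam p.1 : ℂ) - (lam j : ℂ) - (p.2 : ℂ) * (ℏ : ℂ)) ℏ‖) := by
  set f : Fin N × ℕ → ℝ := fun p =>
      (1 / ((p.2.factorial : ℝ) * ℏ ^ p.2)) *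
        Real.exp (-(x / ℏ) * (lam p.1 - (p.2 : ℝ) * ℏ)) *
        ∏ j ∈ Finset.univ.erase p.1,
          ‖Γ₁ ((lam p.1 : ℂ) - (lam j : ℂ) - (p.2 : ℂ) * (ℏ : ℂ)) ℏ‖ with hf
  have hnonneg : ∀ p, 0 ≤ f p := by
    intro p
    apply mul_nonneg (mul_nonneg (by positivity) (Real.exp_nonneg _))
    exact Finset.prod_nonneg fun j _ => norm_nonneg _
  rw [summable_prod_of_nonneg hnonneg]
  constructor
  · intro i
    apply summable_of_ratio_norm_eventually_le (r := 1/2) (by norm_num)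
    -- eventual bounds
    have ht : Filter.Tendsto (fun n : ℕ => ((n : ℝ) + 1) * ℏ) Filter.atTop Filter.atTop := by
      apply Filter.Tendsto.atTop_mul_const hℏ
      exact Filter.tendsto_atTop_add_const_right _ 1 tendsto_natCast_atTop_atTop
    have h2 : ∀ᶠ n : ℕ in Filter.atTop, 2 ≤ ((n : ℝ) + 1) * ℏ := ht.eventually_ge_atTop 2
    have hj : ∀ᶠ n : ℕ in Filter.atTop, ∀ j ∈ Finset.univ.erase i,
        1 ≤ ((n : ℝ) + 1) * ℏ - (lam i - lam j) := by
      rw [Filter.eventually_all_finset]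
      intro j _
      filter_upwards [ht.eventually_ge_atTop (lam i - lam j + 1)] with n hn
      linarith
    filter_upwards [h2, hj] with n hn2 hnj
    have hfn1 : f (i, n + 1) ≤ (Real.exp x / (((n : ℝ) + 1) * ℏ)) * f (i, n) := by
      have hprod : (∏ j ∈ Finset.univ.erase i,
          ‖Γ₁ ((lam i : ℂ) - (lam j : ℂ) - ((n + 1 : ℕ) : ℂ) * (ℏ : ℂ)) ℏ‖) ≤
          ∏ j ∈ Finset.univ.erase i,
          ‖Γ₁ ((lam i : ℂ) - (lam j : ℂ) - ((n : ℕ) : ℂ) * (ℏ : ℂ)) ℏ‖ := by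
        apply Finset.prod_le_prod (fun j _ => norm_nonneg _)
        intro j hjmem
        have hjne : i ≠ j := (Finset.mem_erase.mp hjmem).1.symm
        have hzne : (lam i : ℂ) - (lam j : ℂ) - (n : ℂ) * (ℏ : ℂ) ≠ (ℏ : ℂ) := by
          intro h
          apply hlam i j hjne ((n : ℤ) + 1)
          have : ((lam i - lam j : ℝ) : ℂ) = ((ℏ * ((n : ℤ) + 1) : ℝ) : ℂ) := by
            push_cast
            linear_combination h
          exact_mod_cast this
        have habs : 1 ≤ ‖(lam i : ℂ) - (lam j : ℂ) - (n : ℂ) * (ℏ : ℂ) - (ℏ : ℂ)‖ := by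
          have : (lam i : ℂ) - (lam j : ℂ) - (n : ℂ) * (ℏ : ℂ) - (ℏ : ℂ) =
              ((lam i - lam j - ((n : ℝ) + 1) * ℏ : ℝ) : ℂ) := by push_cast; ring
          rw [this, Complex.norm_real, Real.norm_eq_abs]
          rw [abs_sub_comm]
          have := hnj j hjmem
          rw [le_abs]
          left
          linarith
        have key := Γ₁_abs_dec hℏ hzne habs
        have harg : (lam i : ℂ) - (lam j : ℂ) - ((n + 1 : ℕ) : ℂ) * (ℏ : ℂ) =
            (lam i : ℂ) - (lam j : ℂ) - (n : ℂ) * (ℏ : ℂ) - (ℏ : ℂ) := by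
          push_cast; ring
        rw [harg]
        exact key
      have hexp : Real.exp (-(x / ℏ) * (lam i - ((n + 1 : ℕ) : ℝ) * ℏ)) =
          Real.exp x * Real.exp (-(x / ℏ) * (lam i - (n : ℝ) * ℏ)) := by
        rw [← Real.exp_add]
        congr 1
        push_cast
        field_simp
        ring
      have hfac : (1 : ℝ) / (((n + 1 : ℕ).factorial : ℝ) * ℏ ^ (n + 1)) =
          (1 / (((n : ℝ) + 1) * ℏ)) * (1 / ((n.factorial : ℝ) * ℏ ^ n)) := by
        rw [Nat.factorial_succ]
        push_cast
        field_simp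
        ring
      calc f (i, n + 1) = (1 / (((n + 1 : ℕ).factorial : ℝ) * ℏ ^ (n + 1))) *
            Real.exp (-(x / ℏ) * (lam i - ((n + 1 : ℕ) : ℝ) * ℏ)) *
            ∏ j ∈ Finset.univ.erase i,
              ‖Γ₁ ((lam i : ℂ) - (lam j : ℂ) - ((n + 1 : ℕ) : ℂ) * (ℏ : ℂ)) ℏ‖ := rfl
        _ ≤ (1 / (((n + 1 : ℕ).factorial : ℝ) * ℏ ^ (n + 1))) *
            Real.exp (-(x / ℏ) * (lam i - ((n + 1 : ℕ) : ℝ) * ℏ)) *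
            ∏ j ∈ Finset.univ.erase i,
              ‖Γ₁ ((lam i : ℂ) - (lam j : ℂ) - ((n : ℕ) : ℂ) * (ℏ : ℂ)) ℏ‖ := by
            apply mul_le_mul_of_nonneg_left hprod (by positivity)
        _ = (Real.exp x / (((n : ℝ) + 1) * ℏ)) * f (i, n) := by
            rw [hexp, hfac, hf]
            ring
    have hnorm1 : ‖f (i, n + 1)‖ = f (i, n + 1) := Real.norm_of_nonneg (hnonneg _)
    have hnorm2 : ‖f (i, n)‖ = f (i, n) := Real.norm_of_nonneg (hnonneg _)
    rw [hnorm1, hnorm2]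
    have hcoef : Real.exp x / (((n : ℝ) + 1) * ℏ) ≤ 1 / 2 := by
      have hex : Real.exp x ≤ 1 := Real.exp_le_one_iff.mpr hx.le
      rw [div_le_div_iff₀ (by linarith) (by norm_num)]
      linarith
    calc f (i, n + 1) ≤ (Real.exp x / (((n : ℝ) + 1) * ℏ)) * f (i, n) := hfn1
      _ ≤ (1 / 2) * f (i, n) := mul_le_mul_of_nonneg_right hcoef (hnonneg _)
  · exact Summable.of_finite
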